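/- Let f : ℝⁿ → ℝ be convex with L-Lipschitz continuous gradient, g₁, g₂ : ℝⁿ → ℝ convex, and E = f + g₁ − g₂. Let M be symmetric with M ⪰ I, β ∈ [0,1), x, x_prev ∈ ℝⁿ, y = x + β(x − x_prev), ξ ∈ ∂g₂(x). If x̄ minimizes z ↦ ⟨∇f(y) − ξ, z⟩ + (L/2)‖z − y‖²_M + g₁(z), then E(x̄) ≤ E(x) + (Lβ²/2)‖x − x_prev‖²_M − (L/2)‖x̄ − x‖²_M. -/

import Mathlib

open scoped RealInnerProductSpace



lemma lineDeriv' {n : ℕ} (f : EuclideanSpace ℝ (Fin n) → ℝ)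
    (f' : EuclideanSpace ℝ (Fin n) → EuclideanSpace ℝ (Fin n))
    (hf' : ∀ z, HasGradientAt f (f' z) z) (y d : EuclideanSpace ℝ (Fin n)) (t : ℝ) :
    HasDerivAt (fun s : ℝ => f (y + s • d)) ⟪f' (y + t • d), d⟫ t := by
  have hc : HasDerivAt (fun s : ℝ => y + s • d) d t := by
    simpa using ((hasDerivAt_id t).smul_const d).const_add y
  have hg := (hf' (y + t • d)).hasFDerivAt
  have := hg.comp_hasDerivAt t hc
  simpa [InnerProductSpace.toDual_apply_apply, Function.comp_def] using this

lemma grad_convex_le' {n : ℕ} (f : EuclideanSpace ℝ (Fin n) → ℝ)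
    (f' : EuclideanSpace ℝ (Fin n) → EuclideanSpace ℝ (Fin n))
    (hf : ConvexOn ℝ Set.univ f)
    (hf' : ∀ z, HasGradientAt f (f' z) z) (y x : EuclideanSpace ℝ (Fin n)) :
    f y + ⟪f' y, x - y⟫ ≤ f x := by
  set d := x - y with hd
  have hh : ConvexOn ℝ (Set.univ : Set ℝ) (fun t : ℝ => f (y + t • d)) := by
    have hA := hf.comp_affineMap (AffineMap.lineMap y x)
    have h1 : (AffineMap.lineMap y x : ℝ →ᵃ[ℝ] EuclideanSpace ℝ (Fin n)) ⁻¹' Set.univ = Set.univ := by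
      simp
    have h2 : (f ∘ (AffineMap.lineMap y x)) = fun t : ℝ => f (y + t • d) := by
      funext t
      simp [AffineMap.lineMap_apply, hd, add_comm]
    rwa [h1, h2] at hA
  have hd0 : HasDerivAt (fun t : ℝ => f (y + t • d)) ⟪f' y, d⟫ 0 := by
    simpa using lineDeriv' f f' hf' y d 0
  have hs := hh.le_slope_of_hasDerivAt (Set.mem_univ (0:ℝ)) (Set.mem_univ 1) one_pos hd0
  rw [slope_def_field] at hs
  have hyd' : y + d = x := by rw [hd]; abel
  simp only [one_smul, zero_smul, add_zero, hyd', sub_zero, div_one] at hs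
  linarith

lemma descent' {n : ℕ} (f : EuclideanSpace ℝ (Fin n) → ℝ)
    (f' : EuclideanSpace ℝ (Fin n) → EuclideanSpace ℝ (Fin n))
    (L : ℝ) (hL : 0 < L)
    (hf' : ∀ z, HasGradientAt f (f' z) z)
    (hLip : LipschitzWith (Real.toNNReal L) f')
    (y x : EuclideanSpace ℝ (Fin n)) :
    f x ≤ f y + ⟪f' y, x - y⟫ + L / 2 * ‖x - y‖ ^ 2 := by
  set d := x - y with hd
  set ψ : ℝ → ℝ := fun t => f (y + t • d) - (⟪f' y, d⟫ * t + L / 2 * ‖d‖ ^ 2 * t ^ 2) with hψdef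
  have hψ : ∀ t : ℝ, HasDerivAt ψ (⟪f' (y + t • d), d⟫ - (⟪f' y, d⟫ + L * ‖d‖ ^ 2 * t)) t := by
    intro t
    have h1 := lineDeriv' f f' hf' y d t
    have h2 : HasDerivAt (fun t : ℝ => ⟪f' y, d⟫ * t + L / 2 * ‖d‖ ^ 2 * t ^ 2)
        (⟪f' y, d⟫ + L * ‖d‖ ^ 2 * t) t := by
      have ha := (hasDerivAt_id t).const_mul ⟪f' y, d⟫
      have hb := (hasDerivAt_pow 2 t).const_mul (L / 2 * ‖d‖ ^ 2)
      have : HasDerivAt (fun t : ℝ => ⟪f' y, d⟫ * t + L / 2 * ‖d‖ ^ 2 * t ^ 2)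
          (⟪f' y, d⟫ * 1 + L / 2 * ‖d‖ ^ 2 * (((2:ℕ):ℝ) * t ^ (2 - 1))) t := ha.add hb
      convert this using 1
      push_cast
      ring
    exact h1.sub h2
  have hdiff : Differentiable ℝ ψ := fun t => (hψ t).differentiableAt
  have hanti : AntitoneOn ψ (Set.Icc (0:ℝ) 1) := by
    apply antitoneOn_of_deriv_nonpos (convex_Icc 0 1) hdiff.continuous.continuousOn
      (hdiff.differentiableOn)
    intro t ht
    rw [interior_Icc] at ht
    rw [(hψ t).deriv]
    have hLc : ((Real.toNNReal L : NNReal) : ℝ) = L := Real.coe_toNNReal L hL.le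
    have hlip := hLip.dist_le_mul (y + t • d) y
    rw [dist_eq_norm, dist_eq_norm, hLc] at hlip
    have h1 : y + t • d - y = t • d := by abel
    rw [h1, norm_smul] at hlip
    have h2 : ⟪f' (y + t • d) - f' y, d⟫ ≤ ‖f' (y + t • d) - f' y‖ * ‖d‖ :=
      real_inner_le_norm _ _
    rw [inner_sub_left] at h2
    have h3 : ‖t‖ = t := by rw [Real.norm_eq_abs]; exact abs_of_pos ht.1
    rw [h3] at hlip
    nlinarith [norm_nonneg d, ht.1.le]
  have h01 := hanti (Set.left_mem_Icc.mpr zero_le_one) (Set.right_mem_Icc.mpr zero_le_one)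
    zero_le_one
  have hyd' : y + d = x := by rw [hd]; abel
  have hψ1 : ψ 1 = f x - (⟪f' y, d⟫ + L / 2 * ‖d‖ ^ 2) := by
    simp only [hψdef, one_smul, hyd', one_pow, mul_one]
  have hψ0 : ψ 0 = f y := by
    simp only [hψdef, zero_smul, add_zero, mul_zero]
    norm_num
  rw [hψ1, hψ0] at h01
  linarith

lemma Mquad' {n : ℕ} (M : EuclideanSpace ℝ (Fin n) →ₗ[ℝ] EuclideanSpace ℝ (Fin n))
    (hMsym : ∀ u v, ⟪M u, v⟫ = ⟪u, M v⟫)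
    (a b : EuclideanSpace ℝ (Fin n)) (t : ℝ) :
    ⟪M (a + t • b), a + t • b⟫ = ⟪M a, a⟫ + 2 * t * ⟪M a, b⟫ + t ^ 2 * ⟪M b, b⟫ := by
  have h1 : ⟪M b, a⟫ = ⟪M a, b⟫ := by rw [hMsym b a, real_inner_comm]
  simp only [map_add, map_smul, inner_add_left, inner_add_right, real_inner_smul_left,
    real_inner_smul_right]
  rw [h1]; ring

lemma strong_min' {n : ℕ} (g₁ : EuclideanSpace ℝ (Fin n) → ℝ)
    (hg₁ : ConvexOn ℝ Set.univ g₁)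
    (L : ℝ) (hL : 0 < L)
    (M : EuclideanSpace ℝ (Fin n) →ₗ[ℝ] EuclideanSpace ℝ (Fin n))
    (hMsym : ∀ u v, ⟪M u, v⟫ = ⟪u, M v⟫)
    (c y x xbar : EuclideanSpace ℝ (Fin n))
    (φ : EuclideanSpace ℝ (Fin n) → ℝ)
    (hφ : ∀ z, φ z = ⟪c, z⟫ + (L / 2) * ⟪M (z - y), z - y⟫ + g₁ z)
    (hmin : ∀ z, φ xbar ≤ φ z) :
    φ xbar + (L / 2) * ⟪M (x - xbar), x - xbar⟫ ≤ φ x := by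
  set Q : ℝ := ⟪M (x - xbar), x - xbar⟫ with hQ
  have key : ∀ t : ℝ, t ∈ Set.Ioo (0:ℝ) 1 → φ xbar + (1 - t) * ((L / 2) * Q) ≤ φ x := by
    intro t ht
    set z : EuclideanSpace ℝ (Fin n) := (1 - t) • xbar + t • x with hz
    have hz2 : z - y = (xbar - y) + t • (x - xbar) := by rw [hz]; module
    have e2 : ⟪M (z - y), z - y⟫ =
        ⟪M (xbar - y), xbar - y⟫ + 2 * t * ⟪M (xbar - y), x - xbar⟫ + t ^ 2 * Q := by
      rw [hz2]; exact Mquad' M hMsym _ _ t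
    have e3 : ⟪M (x - y), x - y⟫ =
        ⟪M (xbar - y), xbar - y⟫ + 2 * ⟪M (xbar - y), x - xbar⟫ + Q := by
      have h := Mquad' M hMsym (xbar - y) (x - xbar) 1
      have h2 : xbar - y + (1:ℝ) • (x - xbar) = x - y := by module
      rw [h2] at h
      rw [h]; ring
    have e1 : ⟪c, z⟫ = (1 - t) * ⟪c, xbar⟫ + t * ⟪c, x⟫ := by
      rw [hz]
      simp only [inner_add_right, real_inner_smul_right]
    have hg : g₁ z ≤ (1 - t) * g₁ xbar + t * g₁ x := by
      have := hg₁.2 (Set.mem_univ xbar) (Set.mem_univ x) (by linarith [ht.2] : (0:ℝ) ≤ 1 - t)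
        ht.1.le (by ring)
      simpa only [smul_eq_mul, hz] using this
    have hzle : φ z ≤ (1 - t) * φ xbar + t * φ x - t * (1 - t) * ((L / 2) * Q) := by
      rw [hφ z, hφ xbar, hφ x, e1, e2, e3]
      nlinarith [hg]
    have h1 := hmin z
    have h2 : t * (φ xbar + (1 - t) * ((L / 2) * Q)) ≤ t * φ x := by nlinarith
    exact le_of_mul_le_mul_left h2 ht.1
  have hlim : Filter.Tendsto (fun t : ℝ => φ xbar + (1 - t) * ((L / 2) * Q))
      (nhdsWithin 0 (Set.Ioi 0)) (nhds (φ xbar + (L / 2) * Q)) := by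
    have hc : Continuous (fun t : ℝ => φ xbar + (1 - t) * ((L / 2) * Q)) := by fun_prop
    have h2 := (hc.tendsto 0).mono_left (nhdsWithin_le_nhds (s := Set.Ioi (0:ℝ)))
    simpa using h2
  refine le_of_tendsto hlim ?_
  filter_upwards [Ioo_mem_nhdsGT_of_mem (Set.left_mem_Ico.mpr one_pos)] with t ht
  exact key t ht


/-- Descent lemma for the linearized (explicit) proximal DC subproblem (Lemma 3). -/
theorem stmt_4 {n : ℕ}
    (f g₁ g₂ : EuclideanSpace ℝ (Fin n) → ℝ)
    (f' : EuclideanSpace ℝ (Fin n) → EuclideanSpace ℝ (Fin n))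
    (L : ℝ) (hL : 0 < L)
    (hf : ConvexOn ℝ Set.univ f)
    (hf' : ∀ z, HasGradientAt f (f' z) z)
    (hLip : LipschitzWith (Real.toNNReal L) f')
    (hg₁ : ConvexOn ℝ Set.univ g₁) (hg₂ : ConvexOn ℝ Set.univ g₂)
    (M : EuclideanSpace ℝ (Fin n) →ₗ[ℝ] EuclideanSpace ℝ (Fin n))
    (hMsym : ∀ u v, ⟪M u, v⟫ = ⟪u, M v⟫)
    (hMgeI : ∀ v, ‖v‖ ^ 2 ≤ ⟪M v, v⟫)
    (β : ℝ) (hβ0 : 0 ≤ β) (hβ1 : β < 1)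
    (x xprev xbar : EuclideanSpace ℝ (Fin n))
    (ξ : EuclideanSpace ℝ (Fin n))
    (hξ : ∀ z, g₂ x + ⟪ξ, z - x⟫ ≤ g₂ z)
    (y : EuclideanSpace ℝ (Fin n)) (hy : y = x + β • (x - xprev))
    (φ : EuclideanSpace ℝ (Fin n) → ℝ)
    (hφ : ∀ z, φ z = ⟪f' y - ξ, z⟫ + (L / 2) * ⟪M (z - y), z - y⟫ + g₁ z)
    (hmin : ∀ z, φ xbar ≤ φ z) :
    f xbar + g₁ xbar - g₂ xbar ≤
      f x + g₁ x - g₂ x + (L * β ^ 2 / 2) * ⟪M (x - xprev), x - xprev⟫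
        - (L / 2) * ⟪M (xbar - x), xbar - x⟫ := by
  have hdesc := descent' f f' L hL hf' hLip y xbar
  have hMd := mul_le_mul_of_nonneg_left (hMgeI (xbar - y)) (by linarith : (0:ℝ) ≤ L / 2)
  have hconv := grad_convex_le' f f' hf hf' y x
  have hsub := hξ xbar
  have hkey := strong_min' g₁ hg₁ L hL M hMsym (f' y - ξ) y x xbar φ hφ hmin
  have hφb := hφ xbar
  have hφx := hφ x
  have i1 : ⟪f' y - ξ, xbar⟫ = ⟪f' y, xbar⟫ - ⟪ξ, xbar⟫ := inner_sub_left _ _ _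
  have i2 : ⟪f' y - ξ, x⟫ = ⟪f' y, x⟫ - ⟪ξ, x⟫ := inner_sub_left _ _ _
  have i3 : ⟪f' y, xbar - y⟫ = ⟪f' y, xbar⟫ - ⟪f' y, y⟫ := inner_sub_right _ _ _
  have i4 : ⟪f' y, x - y⟫ = ⟪f' y, x⟫ - ⟪f' y, y⟫ := inner_sub_right _ _ _
  have i5 : ⟪ξ, xbar - x⟫ = ⟪ξ, xbar⟫ - ⟪ξ, x⟫ := inner_sub_right _ _ _
  have e4 : ⟪M (x - y), x - y⟫ = β ^ 2 * ⟪M (x - xprev), x - xprev⟫ := by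
    have hxy : x - y = (-β) • (x - xprev) := by rw [hy]; module
    rw [hxy, map_smul, real_inner_smul_left, real_inner_smul_right]; ring
  have e5 : ⟪M (x - xbar), x - xbar⟫ = ⟪M (xbar - x), xbar - x⟫ := by
    have h : x - xbar = -(xbar - x) := by abel
    rw [h, map_neg, inner_neg_neg]
  rw [e4] at hφx
  rw [e5] at hkey
  rw [i3] at hdesc
  rw [i4] at hconv
  rw [i5] at hsub
  rw [i1] at hφb
  rw [i2] at hφx
  linarith [hdesc, hMd, hconv, hsub, hkey, hφb, hφx]
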